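/- Let f : [0,1]^d → [0,1] be 1-Lipschitz with respect to the sup norm. For every depth M ≥ 1, partition [0,1]^d into 2^{Md} dyadic cubes of side 2^{-M}; then there exist coefficients c_m(σ_{1:m}) ∈ {-1, 0, 1} for all m = 1,…,M and all dyadic indices σ_{1:m} such that the piecewise-constant function f_M(x) = 1/2 + ∑_{m=1}^M 2^{-m} c_m(σ_{1:m}(x)), where σ_{1:m}(x) indexes the depth-m dyadic cube containing x, satisfies sup_{x ∈ [0,1]^d} |f_M(x) − f(x)| ≤ 2^{-M}. -/

import Mathlib

open Finset

/-- Quantizer to `{-1,0,1}`. -/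
noncomputable def qz (t : ℝ) : ℝ := if t < -(1/2) then -1 else if (1/2 : ℝ) < t then 1 else 0

lemma qz_mem (t : ℝ) : qz t = -1 ∨ qz t = 0 ∨ qz t = 1 := by
  unfold qz; split_ifs <;> simp

lemma qz_err {t : ℝ} (h : |t| ≤ 3/2) : |t - qz t| ≤ 1/2 := by
  rw [abs_le] at h ⊢
  unfold qz; split_ifs <;> constructor <;> linarith

/-- Parent dyadic address. -/
noncomputable def par {d : ℕ} (σ : Fin d → ℤ) : Fin d → ℤ := fun i => ⌊((σ i : ℝ)) / 2⌋

/-- Clamped center of the dyadic cube with address `σ` at depth `m`. -/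
noncomputable def ctr {d : ℕ} (m : ℕ) (σ : Fin d → ℤ) : Fin d → ℝ :=
  fun i => min (max (((σ i : ℝ) + 1/2) / 2 ^ m) 0) 1

/-- Recursive partial sums of the wavelet-like expansion. -/
noncomputable def Sf {d : ℕ} (f : (Fin d → ℝ) → ℝ) : ℕ → (Fin d → ℤ) → ℝ
  | 0, _ => 1/2
  | (m+1), σ => Sf f m (par σ) +
      ((2:ℝ) ^ (m+1))⁻¹ * qz ((f (ctr (m+1) σ) - Sf f m (par σ)) * 2 ^ (m+1))

lemma floor_half_floor (y : ℝ) : ⌊((⌊y⌋ : ℝ)) / 2⌋ = ⌊y / 2⌋ := by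
  set k := ⌊y / 2⌋ with hk
  have h1 : (2 * k : ℝ) ≤ y := by
    have := Int.floor_le (y / 2); rw [← hk] at this; linarith
  have h2 : y < 2 * k + 2 := by
    have := Int.lt_floor_add_one (y / 2); rw [← hk] at this; linarith
  have hk1 : (2 * k : ℤ) ≤ ⌊y⌋ := Int.le_floor.2 (by push_cast; linarith)
  have hk2 : ⌊y⌋ < 2 * k + 2 := Int.floor_lt.2 (by push_cast; linarith)
  have hk1' : (2 * k : ℝ) ≤ (⌊y⌋ : ℝ) := by exact_mod_cast hk1
  have hk2' : ((⌊y⌋ : ℝ)) < 2 * k + 2 := by exact_mod_cast hk2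
  refine Int.floor_eq_iff.2 ⟨by push_cast; linarith, by push_cast; linarith⟩

lemma cl_lip (a b : ℝ) : |min (max a 0) 1 - min (max b 0) 1| ≤ |a - b| :=
  (abs_min_sub_min_le_max _ _ _ _).trans
    (max_le (abs_max_sub_max_le_abs a b 0) (by simpa using abs_nonneg (a - b)))

lemma ctr_mem {d : ℕ} (m : ℕ) (σ : Fin d → ℤ) : ctr m σ ∈ Set.Icc (0 : Fin d → ℝ) 1 := by
  constructor <;> intro i <;> simp only [ctr, Pi.zero_apply, Pi.one_apply]
  · exact le_min (le_max_right _ _) zero_le_one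
  · exact min_le_right _ _

theorem stmt_4 (d M : ℕ) (hd : 1 ≤ d) (hM : 1 ≤ M)
    (f : (Fin d → ℝ) → ℝ)
    (hf01 : ∀ x ∈ Set.Icc (0 : Fin d → ℝ) 1, f x ∈ Set.Icc (0 : ℝ) 1)
    (hfLip : ∀ x ∈ Set.Icc (0 : Fin d → ℝ) 1, ∀ y ∈ Set.Icc (0 : Fin d → ℝ) 1,
        |f x - f y| ≤ ‖x - y‖) :
    ∃ c : ℕ → (Fin d → ℤ) → ℝ,
      (∀ m σ, c m σ = -1 ∨ c m σ = 0 ∨ c m σ = 1) ∧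
      ∀ x ∈ Set.Icc (0 : Fin d → ℝ) 1,
        |(1 / 2 + ∑ m ∈ Finset.Icc 1 M,
              (2 : ℝ) ^ (-(m : ℤ)) * c m (fun i => ⌊(2 : ℝ) ^ m * x i⌋))
            - f x| ≤ (2 : ℝ) ^ (-(M : ℤ)) := by
  -- Lipschitz bound coordinatewise
  have lip : ∀ u ∈ Set.Icc (0 : Fin d → ℝ) 1, ∀ v ∈ Set.Icc (0 : Fin d → ℝ) 1,
      ∀ r : ℝ, 0 ≤ r → (∀ i, |u i - v i| ≤ r) → |f u - f v| ≤ r := by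
    intro u hu v hv r hr h
    refine (hfLip u hu v hv).trans ?_
    rw [pi_norm_le_iff_of_nonneg hr]
    intro i
    simpa [Real.norm_eq_abs] using h i
  refine ⟨fun m σ => if m = 0 then 0 else
      qz ((f (ctr m σ) - Sf f (m-1) (par σ)) * 2 ^ m), fun m σ => ?_, ?_⟩
  · dsimp only
    split_ifs
    · exact Or.inr (Or.inl rfl)
    · exact qz_mem _
  intro x hx
  beta_reduce
  set A : ℕ → (Fin d → ℤ) := fun m => fun i => ⌊(2:ℝ) ^ m * x i⌋ with hA
  have key1 : ∀ m : ℕ, par (A (m+1)) = A m := by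
    intro m; funext i
    show ⌊((⌊(2:ℝ)^(m+1) * x i⌋ : ℝ)) / 2⌋ = ⌊(2:ℝ)^m * x i⌋
    rw [floor_half_floor]
    congr 1; ring
  -- the sum telescopes to Sf
  have key2 : ∀ m : ℕ,
      (1/2 + ∑ k ∈ Finset.Icc 1 m, ((2:ℝ) ^ (k:ℕ))⁻¹ *
        (if k = 0 then 0 else qz ((f (ctr k (A k)) - Sf f (k-1) (par (A k))) * 2 ^ k)))
        = Sf f m (A m) := by
    intro m
    induction m with
    | zero => simp [Sf, Finset.Icc_eq_empty (by norm_num : ¬ (1:ℕ) ≤ 0)]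
    | succ m ih =>
      rw [Finset.sum_Icc_succ_top (by omega : 1 ≤ m + 1), ← add_assoc, ih]
      simp only [Nat.succ_ne_zero, if_false, Nat.add_sub_cancel]
      show _ = Sf f (m+1) (A (m+1))
      simp only [Sf, key1]
  -- the invariant
  have inv : ∀ m : ℕ, |Sf f m (A m) - f (ctr m (A m))| ≤ ((2:ℝ) ^ m)⁻¹ / 2 := by
    intro m
    induction m with
    | zero =>
      have h := hf01 (ctr 0 (A 0)) (ctr_mem _ _)
      simp only [Sf, pow_zero, inv_one]
      rw [abs_le]; constructor <;> [linarith [h.2]; linarith [h.1]]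
    | succ m ih =>
      have hpow : (0:ℝ) < 2 ^ (m+1) := by positivity
      -- distance between consecutive centers
      have hctr : ∀ i, |ctr (m+1) (A (m+1)) i - ctr m (A m) i| ≤ ((2:ℝ)^(m+1))⁻¹ / 2 := by
        intro i
        rw [← key1 m]
        set s : ℤ := A (m+1) i with hs
        set p : ℤ := ⌊((s : ℝ)) / 2⌋ with hp
        have hb1 : ((p : ℝ)) ≤ (s : ℝ) / 2 := Int.floor_le _
        have hb2 : (s : ℝ) / 2 < p + 1 := Int.lt_floor_add_one _
        have hb1' : (2 * p : ℤ) ≤ s := by exact_mod_cast (by linarith : (2 * p : ℝ) ≤ s)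
        have hb2' : (s : ℤ) < 2 * p + 2 := by exact_mod_cast (by linarith : (s : ℝ) < 2 * p + 2)
        have hb3 : s ≤ 2 * p + 1 := by omega
        have hb3' : (s : ℝ) ≤ 2 * p + 1 := by exact_mod_cast hb3
        have hb1'' : (2 * p : ℝ) ≤ s := by exact_mod_cast hb1'
        have harg : ctr (m+1) (A (m+1)) i = min (max (((s:ℝ) + 1/2) / 2 ^ (m+1)) 0) 1 := rfl
        have harg2 : ctr m (par (A (m+1))) i = min (max (((p:ℝ) + 1/2) / 2 ^ m) 0) 1 := rfl
        rw [harg, harg2]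
        refine (cl_lip _ _).trans ?_
        have heq : ((s:ℝ) + 1/2) / 2 ^ (m+1) - ((p:ℝ) + 1/2) / 2 ^ m
            = ((s:ℝ) - 2 * p - 1/2) / 2 ^ (m+1) := by
          field_simp; ring
        rw [heq, abs_div, abs_of_pos hpow]
        have hnum : |(s:ℝ) - 2 * p - 1/2| ≤ 1/2 := by rw [abs_le]; constructor <;> linarith
        calc |(s:ℝ) - 2 * p - 1/2| / 2 ^ (m+1) ≤ (1/2) / 2 ^ (m+1) := by gcongr
          _ = ((2:ℝ) ^ (m+1))⁻¹ / 2 := by rw [inv_eq_one_div]; ring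
      have hc1 := ctr_mem (d := d) (m+1) (A (m+1))
      have hc2 := ctr_mem (d := d) m (A m)
      have hfd : |f (ctr (m+1) (A (m+1))) - f (ctr m (A m))| ≤ ((2:ℝ)^(m+1))⁻¹ / 2 :=
        lip _ hc1 _ hc2 _ (by positivity) hctr
      set t : ℝ := f (ctr (m+1) (A (m+1))) - Sf f m (A m) with ht
      have hpm : ((2:ℝ)^(m+1))⁻¹ = ((2:ℝ)^m)⁻¹ / 2 := by
        rw [pow_succ]; field_simp
      have htb : |t| ≤ (3/2) * ((2:ℝ)^(m+1))⁻¹ := by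
        have he : t = (f (ctr (m+1) (A (m+1))) - f (ctr m (A m)))
            - (Sf f m (A m) - f (ctr m (A m))) := by rw [ht]; ring
        have habs : |t| ≤ |f (ctr (m+1) (A (m+1))) - f (ctr m (A m))|
            + |Sf f m (A m) - f (ctr m (A m))| := by rw [he]; exact abs_sub _ _
        linarith [ih, hfd, hpm.symm.le, hpm.le]
      have hu : |t * 2 ^ (m+1)| ≤ 3/2 := by
        rw [abs_mul, abs_of_pos hpow]
        calc |t| * 2^(m+1) ≤ ((3/2) * ((2:ℝ)^(m+1))⁻¹) * 2^(m+1) := by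
              exact mul_le_mul_of_nonneg_right htb (le_of_lt hpow)
          _ = 3/2 := by rw [mul_assoc, inv_mul_cancel₀ (ne_of_gt hpow), mul_one]
      have herr := qz_err hu
      have hSf : Sf f (m+1) (A (m+1)) = Sf f m (A m)
          + ((2:ℝ) ^ (m+1))⁻¹ * qz (t * 2 ^ (m+1)) := by
        simp only [Sf, key1, ht]
      rw [hSf]
      have : Sf f m (A m) + ((2:ℝ) ^ (m+1))⁻¹ * qz (t * 2 ^ (m+1))
          - f (ctr (m+1) (A (m+1)))
          = -(((2:ℝ)^(m+1))⁻¹ * (t * 2^(m+1) - qz (t * 2^(m+1)))) := by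
        field_simp; ring
      rw [this, abs_neg, abs_mul, abs_of_pos (by positivity : (0:ℝ) < ((2:ℝ)^(m+1))⁻¹)]
      calc ((2:ℝ)^(m+1))⁻¹ * |t * 2^(m+1) - qz (t * 2^(m+1))|
          ≤ ((2:ℝ)^(m+1))⁻¹ * (1/2) := by
            exact mul_le_mul_of_nonneg_left herr (by positivity)
        _ = ((2:ℝ)^(m+1))⁻¹ / 2 := by ring
  -- final distance from x to the depth-M center
  have hpowM : (0:ℝ) < 2 ^ M := by positivity
  have hxc : ∀ i, |ctr M (A M) i - x i| ≤ ((2:ℝ)^M)⁻¹ / 2 := by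
    intro i
    have hx0 : (0:ℝ) ≤ x i := hx.1 i
    have hx1 : x i ≤ 1 := hx.2 i
    have hxeq : x i = min (max (x i) 0) 1 := by rw [max_eq_left hx0, min_eq_left hx1]
    have harg : ctr M (A M) i = min (max (((⌊(2:ℝ)^M * x i⌋ : ℝ) + 1/2) / 2 ^ M) 0) 1 := rfl
    rw [harg]
    nth_rewrite 2 [hxeq]
    refine (cl_lip _ _).trans ?_
    have hf1 : ((⌊(2:ℝ)^M * x i⌋ : ℝ)) ≤ (2:ℝ)^M * x i := Int.floor_le _
    have hf2 : (2:ℝ)^M * x i < (⌊(2:ℝ)^M * x i⌋ : ℝ) + 1 := Int.lt_floor_add_one _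
    have heq : ((⌊(2:ℝ)^M * x i⌋ : ℝ) + 1/2) / 2 ^ M - x i
        = ((⌊(2:ℝ)^M * x i⌋ : ℝ) + 1/2 - (2:ℝ)^M * x i) / 2 ^ M := by
      field_simp
    rw [heq, abs_div, abs_of_pos hpowM]
    have hnum : |(⌊(2:ℝ)^M * x i⌋ : ℝ) + 1/2 - (2:ℝ)^M * x i| ≤ 1/2 := by
      rw [abs_le]; constructor <;> linarith
    calc |(⌊(2:ℝ)^M * x i⌋ : ℝ) + 1/2 - (2:ℝ)^M * x i| / 2 ^ M ≤ (1/2) / 2 ^ M := by gcongr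
      _ = ((2:ℝ) ^ M)⁻¹ / 2 := by rw [inv_eq_one_div]; ring
  have hcM := ctr_mem (d := d) M (A M)
  have hfxc : |f (ctr M (A M)) - f x| ≤ ((2:ℝ)^M)⁻¹ / 2 :=
    lip _ hcM _ hx _ (by positivity) (fun i => by
      simpa using hxc i)
  have hzp : ∀ k : ℕ, (2:ℝ) ^ (-(k:ℤ)) = ((2:ℝ)^k)⁻¹ := by
    intro k; rw [zpow_neg, zpow_natCast]
  have hgoal := key2 M
  simp only [hA] at hgoal
  simp only [hzp]
  rw [hgoal]
  calc |Sf f M (A M) - f x|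
      ≤ |Sf f M (A M) - f (ctr M (A M))| + |f (ctr M (A M)) - f x| := by
        have : Sf f M (A M) - f x
            = (Sf f M (A M) - f (ctr M (A M))) + (f (ctr M (A M)) - f x) := by ring
        rw [this]; exact abs_add_le _ _
    _ ≤ ((2:ℝ)^M)⁻¹ / 2 + ((2:ℝ)^M)⁻¹ / 2 := add_le_add (inv M) hfxc
    _ = ((2:ℝ)^M)⁻¹ := by ring
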